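/- Let m ≥ 1, n = m+1, and let h, z_F, T_e, f, 𝒢, M_α, ℱ, Δt all be strictly positive reals. Let M be the mass matrix, Q the matrix defined below, D ∈ ℝⁿ any vector, and S(D), A(D) the matrices defined below. Suppose κ ≥ 0 satisfies vᵀ((1/z_F)S(D) − M_α·A(D))v ≥ −κ·vᵀMv for all v ∈ ℝ^m, and that (T_e·Δt/f)·(κ/z_F − 𝒢) < 1. Define C = (𝒢/f)·M + (1/(z_F²·f))·S(D) − (M_α/(z_F·f))·A(D) + (1/z_F)·Q. Then for every nonzero v ∈ ℝ^m, vᵀ(M + T_e·Δt·C)v ≥ (1 + (T_e·Δt/f)·(𝒢 − κ/z_F))·vᵀMv > 0; in particular the matrix M + T_e·Δt·C of the fully discrete Euler-implicit finite element scheme is invertible. -/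

import Mathlib

open Matrix Finset

/-- 1-based access to the entries of a finite vector, with value `0` at index `0`
and out of range. -/
def pad1 {n : ℕ} (v : Fin n → ℝ) : ℕ → ℝ :=
  fun k => if hk : k - 1 < n then (if k = 0 then 0 else v ⟨k - 1, hk⟩) else 0

/-- The `m × m` mass matrix (1-based mathematical indexing). -/
noncomputable def massM (m : ℕ) (h : ℝ) : Matrix (Fin m) (Fin m) ℝ :=
  Matrix.of fun i j =>
    if i = j then (if i.val = 0 ∨ i.val = m - 1 then 2 * h / 6 else 4 * h / 6)
    else if i.val + 1 = j.val ∨ j.val + 1 = i.val then h / 6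
    else 0

/-- The `m × m` matrix `Q`: `Q_{i,i+1} = −ℱ/2`, `Q_{i+1,i} = ℱ/2`, `Q_{mm} = ℱ/2`. -/
noncomputable def matQ (m : ℕ) (F : ℝ) : Matrix (Fin m) (Fin m) ℝ :=
  Matrix.of fun i j =>
    if i.val + 1 = j.val then -(F / 2)
    else if j.val + 1 = i.val then F / 2
    else if i = j ∧ i.val = m - 1 then F / 2
    else 0

/-- The symmetric tridiagonal stiffness matrix `S(D)` (1-based mathematical indexing). -/
noncomputable def matS (m : ℕ) (h : ℝ) (d : ℕ → ℝ) : Matrix (Fin m) (Fin m) ℝ :=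
  Matrix.of fun i j =>
    if i = j then
      (if i.val + 1 = m then (d m + d (m + 1)) / (2 * h)
       else (d (i.val + 1) + 2 * d (i.val + 2) + d (i.val + 3)) / (2 * h))
    else if i.val + 1 = j.val then -((d (i.val + 2) + d (i.val + 3)) / (2 * h))
    else if j.val + 1 = i.val then -((d (j.val + 2) + d (j.val + 3)) / (2 * h))
    else 0

/-- The tridiagonal matrix `A(D)` (1-based mathematical indexing). -/
noncomputable def matA (m : ℕ) (d : ℕ → ℝ) : Matrix (Fin m) (Fin m) ℝ :=
  Matrix.of fun i j =>
    if i = j then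
      (if i.val + 1 = m then (d m + d (m + 1)) / 4
       else (d (i.val + 1) - d (i.val + 3)) / 4)
    else if i.val + 1 = j.val then (d (i.val + 2) + d (i.val + 3)) / 4
    else if j.val + 1 = i.val then -((d (j.val + 2) + d (j.val + 3)) / 4)
    else 0

section Aux

lemma massM_symm (m : ℕ) (h : ℝ) (i j : Fin m) : massM m h i j = massM m h j i := by
  simp only [massM, Matrix.of_apply]
  by_cases hij : i = j
  · subst hij; rfl
  · rw [if_neg hij, if_neg (Ne.symm hij)]
    exact if_congr or_comm rfl rfl

lemma massM_offdiag (m : ℕ) (h : ℝ) (i j : Fin m) (hij : j ≠ i) :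
    massM m h i j = (if j.val = i.val + 1 then h/6 else 0) +
      (if j.val + 1 = i.val then h/6 else 0) := by
  simp only [massM, Matrix.of_apply]
  have hv : i.val ≠ j.val := fun hc => hij (Fin.ext hc.symm)
  rw [if_neg (Ne.symm hij)]
  by_cases h1 : i.val + 1 = j.val
  · rw [if_pos (Or.inl h1), if_pos (by omega), if_neg (by omega)]
    ring
  · by_cases h2 : j.val + 1 = i.val
    · rw [if_pos (Or.inr h2), if_neg (by omega), if_pos h2]
      ring
    · rw [if_neg (by tauto), if_neg (by omega), if_neg h2]
      ring

lemma sum_ite_val (m t : ℕ) (c : ℝ) :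
    ∑ j : Fin m, (if j.val = t then c else 0) = if t < m then c else 0 := by
  by_cases ht : t < m
  · have : ∀ j : Fin m, (j.val = t) = (j = ⟨t, ht⟩) := fun j => by
      simp [Fin.ext_iff]
    simp_rw [this]
    simp [ht]
  · rw [if_neg ht]
    apply Finset.sum_eq_zero
    intro j _
    rw [if_neg]
    omega

lemma qf_expand (m : ℕ) (X : Matrix (Fin m) (Fin m) ℝ) (v : Fin m → ℝ) :
    v ⬝ᵥ X.mulVec v = ∑ i, ∑ j, v i * X i j * v j := by
  simp [dotProduct, mulVec, Finset.mul_sum, mul_assoc]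

lemma massM_offdiag_nonneg (m : ℕ) (h : ℝ) (hh : 0 < h) (i j : Fin m) (hij : j ≠ i) :
    0 ≤ massM m h i j := by
  rw [massM_offdiag m h i j hij]
  positivity

lemma massM_offsum (m : ℕ) (h : ℝ) (i : Fin m) :
    ∑ j, (if j = i then 0 else massM m h i j) =
      (if i.val + 1 < m then h/6 else 0) + (if 1 ≤ i.val then h/6 else 0) := by
  have key : ∀ j : Fin m, (if j = i then 0 else massM m h i j) =
      (if j.val = i.val + 1 then h/6 else 0) +
      (if j.val = i.val - 1 ∧ 1 ≤ i.val then h/6 else 0) := by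
    intro j
    by_cases hj : j = i
    · subst hj
      rw [if_pos rfl, if_neg (by omega), if_neg (by omega)]
      norm_num
    · rw [if_neg hj, massM_offdiag m h i j hj]
      congr 1
      have hv : j.val ≠ i.val := fun hc => hj (Fin.ext hc)
      split_ifs <;> first | rfl | (exfalso; omega)
  simp_rw [key]
  rw [Finset.sum_add_distrib, sum_ite_val]
  by_cases h1 : 1 ≤ i.val
  · simp only [h1, and_true]
    rw [sum_ite_val]
    have h2 : i.val - 1 < m := by omega
    simp [h2, h1]
  · simp only [h1, and_false, if_false]
    simp [h1]

lemma massM_diag_gap (m : ℕ) (h : ℝ) (hh : 0 < h) (i : Fin m) :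
    (if i.val + 1 < m then h/6 else 0) + (if 1 ≤ i.val then h/6 else 0) + h/6
      ≤ massM m h i i := by
  have him : i.val < m := i.isLt
  simp only [massM, Matrix.of_apply, if_pos rfl]
  split_ifs <;> first | linarith | (exfalso; omega)

lemma massM_qf_ge (m : ℕ) (h : ℝ) (hh : 0 < h) (v : Fin m → ℝ) :
    h / 6 * ∑ i, v i ^ 2 ≤ v ⬝ᵥ (massM m h).mulVec v := by
  rw [qf_expand]
  have step1 : ∀ i : Fin m, ∑ j, (if j = i then massM m h i i * v i ^ 2
        else -(massM m h i j * (v i ^ 2 + v j ^ 2) / 2)) ≤ ∑ j, v i * massM m h i j * v j := by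
    intro i
    apply Finset.sum_le_sum
    intro j _
    by_cases hj : j = i
    · subst hj; rw [if_pos rfl]; exact le_of_eq (by ring)
    · rw [if_neg hj]
      have h0 : 0 ≤ massM m h i j := massM_offdiag_nonneg m h hh i j hj
      nlinarith [sq_nonneg (v i + v j)]
  have inner : ∀ i : Fin m, ∑ j, (if j = i then massM m h i i * v i ^ 2
        else -(massM m h i j * (v i ^ 2 + v j ^ 2) / 2)) =
        massM m h i i * v i ^ 2
          - (∑ j, (if j = i then 0 else massM m h i j)) * v i ^ 2 / 2
          - (∑ j, (if j = i then 0 else massM m h i j * v j ^ 2)) / 2 := by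
    intro i
    have pts : ∀ j : Fin m, (if j = i then massM m h i i * v i ^ 2
        else -(massM m h i j * (v i ^ 2 + v j ^ 2) / 2)) =
        (if j = i then massM m h i i * v i ^ 2 else 0)
        - (if j = i then 0 else massM m h i j) * v i ^ 2 / 2
        - (if j = i then 0 else massM m h i j * v j ^ 2) / 2 := by
      intro j
      by_cases hj : j = i <;> simp [hj] <;> ring
    simp_rw [pts]
    rw [Finset.sum_sub_distrib, Finset.sum_sub_distrib]
    congr 1
    · congr 1
      · simp
      · rw [← Finset.sum_div, ← Finset.sum_mul]
    · rw [← Finset.sum_div]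
  have swap : ∑ i : Fin m, (∑ j, (if j = i then 0 else massM m h i j * v j ^ 2)) / 2
      = ∑ i : Fin m, (∑ j, (if j = i then 0 else massM m h i j)) * v i ^ 2 / 2 := by
    rw [← Finset.sum_div, ← Finset.sum_div]
    congr 1
    rw [Finset.sum_comm]
    apply Finset.sum_congr rfl
    intro j _
    have pts : ∀ i : Fin m, (if j = i then (0:ℝ) else massM m h i j * v j ^ 2)
        = (if i = j then 0 else massM m h j i) * v j ^ 2 := by
      intro i
      by_cases hij : i = j
      · simp [hij]
      · rw [if_neg (Ne.symm hij), if_neg hij, massM_symm]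
    simp_rw [pts]
    rw [← Finset.sum_mul]
  calc h / 6 * ∑ i, v i ^ 2
      = ∑ i, h / 6 * v i ^ 2 := Finset.mul_sum _ _ _
    _ ≤ ∑ i, (massM m h i i - (∑ j, (if j = i then 0 else massM m h i j))) * v i ^ 2 := by
        apply Finset.sum_le_sum
        intro i _
        apply mul_le_mul_of_nonneg_right _ (sq_nonneg _)
        have h1 := massM_diag_gap m h hh i
        rw [massM_offsum m h i]
        linarith
    _ = ∑ i, (massM m h i i * v i ^ 2
          - (∑ j, (if j = i then 0 else massM m h i j)) * v i ^ 2 / 2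
          - (∑ j, (if j = i then 0 else massM m h i j)) * v i ^ 2 / 2) := by
        apply Finset.sum_congr rfl; intro i _; ring
    _ = ∑ i, (massM m h i i * v i ^ 2
          - (∑ j, (if j = i then 0 else massM m h i j)) * v i ^ 2 / 2
          - (∑ j, (if j = i then 0 else massM m h i j * v j ^ 2)) / 2) := by
        simp only [Finset.sum_sub_distrib]
        rw [swap]
    _ = ∑ i, ∑ j, (if j = i then massM m h i i * v i ^ 2
          else -(massM m h i j * (v i ^ 2 + v j ^ 2) / 2)) := by
        apply Finset.sum_congr rfl; intro i _; rw [inner]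
    _ ≤ ∑ i, ∑ j, v i * massM m h i j * v j := Finset.sum_le_sum fun i _ => step1 i

lemma massM_qf_pos (m : ℕ) (h : ℝ) (hh : 0 < h) (v : Fin m → ℝ) (hv : v ≠ 0) :
    0 < v ⬝ᵥ (massM m h).mulVec v := by
  have h1 := massM_qf_ge m h hh v
  have h2 : 0 < ∑ i, v i ^ 2 := by
    obtain ⟨i, hi⟩ := Function.ne_iff.1 hv
    apply Finset.sum_pos' (fun j _ => sq_nonneg _)
    refine ⟨i, Finset.mem_univ i, ?_⟩
    have hi' : v i ≠ 0 := hi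
    positivity
  have : 0 < h / 6 * ∑ i, v i ^ 2 := by positivity
  linarith

lemma matQ_add (m : ℕ) (F : ℝ) (i j : Fin m) :
    matQ m F i j + matQ m F j i = if j = i ∧ i.val = m - 1 then F else 0 := by
  simp only [matQ, Matrix.of_apply]
  by_cases h1 : i.val + 1 = j.val
  · have hji : ¬(j.val + 1 = i.val) := by omega
    have hne : ¬(j = i) := fun e => by rw [e] at h1; omega
    rw [if_pos h1, if_neg hji, if_pos h1,
      if_neg (fun hc : j = i ∧ i.val = m - 1 => hne hc.1)]
    ring
  · by_cases h2 : j.val + 1 = i.val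
    · have hne : ¬(j = i) := fun e => by rw [e] at h2; omega
      rw [if_neg h1, if_pos h2, if_pos h2,
        if_neg (fun hc : j = i ∧ i.val = m - 1 => hne hc.1)]
      ring
    · rw [if_neg h1, if_neg h2, if_neg h2, if_neg h1]
      by_cases hij : j = i
      · subst hij
        by_cases hm : j.val = m - 1
        · rw [if_pos ⟨rfl, hm⟩, if_pos ⟨rfl, hm⟩]
          ring
        · rw [if_neg (fun hc : j = j ∧ j.val = m - 1 => hm hc.2),
            if_neg (fun hc : j = j ∧ j.val = m - 1 => hm hc.2)]
          norm_num
      · rw [if_neg (fun hc : i = j ∧ i.val = m - 1 => hij hc.1.symm),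
          if_neg (fun hc : j = i ∧ j.val = m - 1 => hij hc.1),
          if_neg (fun hc : j = i ∧ i.val = m - 1 => hij hc.1)]
        ring

lemma matQ_qf_nonneg (m : ℕ) (F : ℝ) (hF : 0 ≤ F) (v : Fin m → ℝ) :
    0 ≤ v ⬝ᵥ (matQ m F).mulVec v := by
  have e1 := qf_expand m (matQ m F) v
  have e2 : v ⬝ᵥ (matQ m F).mulVec v = ∑ i, ∑ j, v i * matQ m F j i * v j := by
    rw [qf_expand, Finset.sum_comm]
    apply Finset.sum_congr rfl
    intro a _
    apply Finset.sum_congr rfl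
    intro b _
    ring
  have e3 : 2 * (v ⬝ᵥ (matQ m F).mulVec v)
      = ∑ i, ∑ j, v i * (matQ m F i j + matQ m F j i) * v j := by
    rw [two_mul]
    nth_rewrite 1 [e1]
    nth_rewrite 1 [e2]
    rw [← Finset.sum_add_distrib]
    apply Finset.sum_congr rfl
    intro i _
    rw [← Finset.sum_add_distrib]
    apply Finset.sum_congr rfl
    intro j _
    ring
  have e4 : 2 * (v ⬝ᵥ (matQ m F).mulVec v)
      = ∑ i : Fin m, v i * (if i.val = m - 1 then F else 0) * v i := by
    rw [e3]
    apply Finset.sum_congr rfl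
    intro i _
    have pts : ∀ j : Fin m, v i * (matQ m F i j + matQ m F j i) * v j
        = (if j = i then v i * (if i.val = m - 1 then F else 0) * v j else 0) := by
      intro j
      rw [matQ_add]
      by_cases hj : j = i
      · simp [hj]
      · simp [hj]
    simp_rw [pts]
    rw [Finset.sum_ite_eq' Finset.univ i]
    simp
  have e5 : 0 ≤ ∑ i : Fin m, v i * (if i.val = m - 1 then F else 0) * v i := by
    apply Finset.sum_nonneg
    intro i _
    have : v i * (if i.val = m - 1 then F else 0) * v i
        = (if i.val = m - 1 then F else 0) * v i ^ 2 := by ring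
    rw [this]
    apply mul_nonneg _ (sq_nonneg _)
    split_ifs <;> simp [hF]
  linarith [e4 ▸ e5]

end Aux
theorem stmt_17 (m : ℕ) (hm : 1 ≤ m)
    (h zF Te f G Ma F Δt : ℝ)
    (hh : 0 < h) (hzF : 0 < zF) (hTe : 0 < Te) (hf : 0 < f) (hG : 0 < G)
    (hMa : 0 < Ma) (hF : 0 < F) (hΔt : 0 < Δt)
    (D : Fin (m + 1) → ℝ)
    (κ : ℝ) (hκ : 0 ≤ κ)
    (hGform : ∀ v : Fin m → ℝ,
      v ⬝ᵥ ((1 / zF) • matS m h (pad1 D) - Ma • matA m (pad1 D)).mulVec v ≥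
        -κ * (v ⬝ᵥ (massM m h).mulVec v))
    (hcond : Te * Δt / f * (κ / zF - G) < 1) :
    (∀ v : Fin m → ℝ, v ≠ 0 →
      v ⬝ᵥ (massM m h + (Te * Δt) •
          ((G / f) • massM m h + (1 / (zF ^ 2 * f)) • matS m h (pad1 D)
            - (Ma / (zF * f)) • matA m (pad1 D) + (1 / zF) • matQ m F)).mulVec v ≥
        (1 + Te * Δt / f * (G - κ / zF)) * (v ⬝ᵥ (massM m h).mulVec v) ∧
      0 < v ⬝ᵥ (massM m h + (Te * Δt) •
          ((G / f) • massM m h + (1 / (zF ^ 2 * f)) • matS m h (pad1 D)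
            - (Ma / (zF * f)) • matA m (pad1 D) + (1 / zF) • matQ m F)).mulVec v) ∧
    IsUnit (massM m h + (Te * Δt) •
        ((G / f) • massM m h + (1 / (zF ^ 2 * f)) • matS m h (pad1 D)
          - (Ma / (zF * f)) • matA m (pad1 D) + (1 / zF) • matQ m F)) := by
  set BIG := massM m h + (Te * Δt) •
      ((G / f) • massM m h + (1 / (zF ^ 2 * f)) • matS m h (pad1 D)
        - (Ma / (zF * f)) • matA m (pad1 D) + (1 / zF) • matQ m F) with hBIG
  have expand : ∀ w : Fin m → ℝ, w ⬝ᵥ BIG.mulVec w =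
      w ⬝ᵥ (massM m h).mulVec w
      + Te * Δt * ((G / f) * (w ⬝ᵥ (massM m h).mulVec w)
        + (1 / (zF ^ 2 * f)) * (w ⬝ᵥ (matS m h (pad1 D)).mulVec w)
        - (Ma / (zF * f)) * (w ⬝ᵥ (matA m (pad1 D)).mulVec w)
        + (1 / zF) * (w ⬝ᵥ (matQ m F).mulVec w)) := by
    intro w
    rw [hBIG]
    simp only [Matrix.add_mulVec, Matrix.sub_mulVec, Matrix.smul_mulVec,
      dotProduct_add, dotProduct_sub, dotProduct_smul, smul_eq_mul]
  have hGform' : ∀ w : Fin m → ℝ,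
      (1 / zF) * (w ⬝ᵥ (matS m h (pad1 D)).mulVec w)
        - Ma * (w ⬝ᵥ (matA m (pad1 D)).mulVec w)
      ≥ -κ * (w ⬝ᵥ (massM m h).mulVec w) := by
    intro w
    have hgw := hGform w
    rw [Matrix.sub_mulVec, Matrix.smul_mulVec, Matrix.smul_mulVec,
      dotProduct_sub, dotProduct_smul, dotProduct_smul, smul_eq_mul, smul_eq_mul] at hgw
    exact hgw
  have main : ∀ v : Fin m → ℝ, v ≠ 0 →
      v ⬝ᵥ BIG.mulVec v ≥
        (1 + Te * Δt / f * (G - κ / zF)) * (v ⬝ᵥ (massM m h).mulVec v) ∧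
      0 < v ⬝ᵥ BIG.mulVec v := by
    intro v hv
    have ha : 0 < v ⬝ᵥ (massM m h).mulVec v := massM_qf_pos m h hh v hv
    have hq : 0 ≤ v ⬝ᵥ (matQ m F).mulVec v := matQ_qf_nonneg m F hF.le v
    have hB := hGform' v
    set a := v ⬝ᵥ (massM m h).mulVec v with ha'
    set qS := v ⬝ᵥ (matS m h (pad1 D)).mulVec v with hqS
    set qA := v ⬝ᵥ (matA m (pad1 D)).mulVec v with hqA
    set qQ := v ⬝ᵥ (matQ m F).mulVec v with hqQ
    have h2 : (1 / (zF * f)) * ((1 / zF) * qS - Ma * qA)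
        ≥ (1 / (zF * f)) * (-κ * a) := by
      apply mul_le_mul_of_nonneg_left hB
      positivity
    have hqz : 0 ≤ (1 / zF) * qQ := by positivity
    have hcoef : (1 / (zF ^ 2 * f)) * qS - (Ma / (zF * f)) * qA
        = (1 / (zF * f)) * ((1 / zF) * qS - Ma * qA) := by
      field_simp
    have heq : (1 / (zF * f)) * (-κ * a) = -(κ / (zF * f) * a) := by ring
    have inner2 : (G / f) * a + (1 / (zF ^ 2 * f)) * qS - (Ma / (zF * f)) * qA
        + (1 / zF) * qQ ≥ (G / f) * a - κ / (zF * f) * a := by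
      linarith [h2, hqz, hcoef, heq]
    have key : Te * Δt * ((G / f) * a + (1 / (zF ^ 2 * f)) * qS
          - (Ma / (zF * f)) * qA + (1 / zF) * qQ)
        ≥ Te * Δt * ((G / f) * a - κ / (zF * f) * a) := by
      apply mul_le_mul_of_nonneg_left inner2
      positivity
    have eqR : (1 + Te * Δt / f * (G - κ / zF)) * a
        = a + Te * Δt * ((G / f) * a - κ / (zF * f) * a) := by
      field_simp
    have ineq : v ⬝ᵥ BIG.mulVec v ≥ (1 + Te * Δt / f * (G - κ / zF)) * a := by
      rw [expand v, eqR]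
      linarith
    refine ⟨ineq, ?_⟩
    have hc : 0 < 1 + Te * Δt / f * (G - κ / zF) := by
      have hrw : Te * Δt / f * (G - κ / zF) = -(Te * Δt / f * (κ / zF - G)) := by ring
      rw [hrw]
      linarith
    have := mul_pos hc ha
    linarith
  refine ⟨main, ?_⟩
  apply Matrix.mulVec_injective_iff_isUnit.mp
  intro x y hxy
  by_contra hne
  have hz : BIG.mulVec (x - y) = 0 := by
    rw [Matrix.mulVec_sub, hxy, sub_self]
  have hp := (main (x - y) (sub_ne_zero.2 hne)).2
  rw [hz, dotProduct_zero] at hp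
  exact lt_irrefl 0 hp
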